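/- Off-policy policy gradient: if trajectories are sampled from a positive-probability autoregressive policy π_old, then the derivative of E_{π_θ}[R] equals ∑_{t=1}^T E_{o_{1:t}∼π_old}[ρ_{1:t} · ∂_θ log π_θ(o_t|o_{<t}) · A^π(o_t; o_{<t})], where ρ_{1:t} = ∏_{i=1}^t π_θ(o_i|o_{<i}) / π_old(o_i|o_{<i}). -/

import Mathlib

/-- Probability of the length-`n` sequence `s` under the autoregressive policy `π`. -/
noncomputable def seqProb {O : Type*} (π : List O → O → ℝ) {n : ℕ} (s : Fin n → O) : ℝ :=
  ∏ i : Fin n, π ((List.ofFn s).take i) (s i)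

/-- Conditional probability of the continuation `c` after the prefix `p` under `π`. -/
noncomputable def contProb {O : Type*} (π : List O → O → ℝ) (p : List O) {k : ℕ}
    (c : Fin k → O) : ℝ :=
  ∏ i : Fin k, π (p ++ (List.ofFn c).take i) (c i)

/-- `Q^π(o_t; o_{<t}) = E_{o_{t+1:T}∼π(·|o_{1:t})}[∑_{i=t}^T r_i(o_{1:i})]` for the
length-`t` prefix `p`. -/
noncomputable def Qval {O : Type*} [Fintype O] (π : List O → O → ℝ) (r : List O → ℝ)
    (T : ℕ) (p : List O) : ℝ :=
  ∑ c : Fin (T - p.length) → O,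
    contProb π p c *
      (r p + ∑ i : Fin (T - p.length), r (p ++ (List.ofFn c).take (i + 1)))

/-- `V^π(o_{<t}) = E_{o_t∼π(·|o_{<t})}[Q^π(o_t; o_{<t})]`. -/
noncomputable def Vval {O : Type*} [Fintype O] (π : List O → O → ℝ) (r : List O → ℝ)
    (T : ℕ) (h : List O) : ℝ :=
  ∑ o : O, π h o * Qval π r T (h ++ [o])

/-- The prefix importance ratio `ρ_{1:t}(s) = ∏_{i≤t} π(s_i|s_{<i}) / π_old(s_i|s_{<i})`. -/
noncomputable def prefixRatio {O : Type*} (π πold : List O → O → ℝ) {t : ℕ}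
    (s : Fin t → O) : ℝ :=
  ∏ i : Fin t, π ((List.ofFn s).take i) (s i) / πold ((List.ofFn s).take i) (s i)

section Helpers
variable {O : Type*}

lemma prodTake_cons (q : List O → O → ℝ) (o : O) {n : ℕ} (s : Fin n → O) :
    (∏ i : Fin (n+1), q ((List.ofFn (Fin.cons (α := fun _ => O) o s)).take (i : ℕ)) (Fin.cons (α := fun _ => O) o s i))
      = q [] o * ∏ i : Fin n, q (o :: (List.ofFn s).take (i : ℕ)) (s i) := by
  rw [Fin.prod_univ_succ]
  simp [List.ofFn_succ, Fin.cons_succ, Fin.cons_zero, List.take_succ_cons]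

lemma seqProb_cons (π : List O → O → ℝ) (o : O) {n : ℕ} (s : Fin n → O) :
    seqProb π (Fin.cons o s) = π [] o * seqProb (fun h => π (o :: h)) s := by
  simpa [seqProb] using prodTake_cons π o s

lemma prefixRatio_cons (π πold : List O → O → ℝ) (o : O) {n : ℕ} (s : Fin n → O) :
    prefixRatio π πold (Fin.cons o s)
      = (π [] o / πold [] o) *
          prefixRatio (fun h => π (o :: h)) (fun h => πold (o :: h)) s := by
  simpa [prefixRatio] using prodTake_cons (fun h a => π h a / πold h a) o s

lemma contProb_nil (π : List O → O → ℝ) {k : ℕ} (c : Fin k → O) :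
    contProb π [] c = seqProb π c := by
  simp [contProb, seqProb]

lemma contProb_cons_prefix (π : List O → O → ℝ) (o : O) (l : List O) {k : ℕ} (c : Fin k → O) :
    contProb π (o :: l) c = contProb (fun h => π (o :: h)) l c := by
  simp [contProb, List.cons_append]

lemma contProb_cons (π : List O → O → ℝ) (p : List O) (o : O) {k : ℕ} (c : Fin k → O) :
    contProb π p (Fin.cons o c) = π p o * contProb π (p ++ [o]) c := by
  unfold contProb
  rw [Fin.prod_univ_succ]
  congr 1
  · simp
  · refine Finset.prod_congr rfl fun i _ => ?_
    simp [List.ofFn_succ, Fin.cons_succ, Fin.cons_zero, List.take_succ_cons,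
      List.append_assoc]

end Helpers

section Helpers2
variable {O : Type*} [Fintype O]

lemma sum_contProb (π : List O → O → ℝ) (hsum : ∀ h, ∑ o, π h o = 1) :
    ∀ (k : ℕ) (p : List O), ∑ c : Fin k → O, contProb π p c = 1 := by
  intro k
  induction k with
  | zero => intro p; simp [contProb]
  | succ k ih =>
      intro p
      rw [← Equiv.sum_comp (Fin.consEquiv fun _ => O)]
      rw [Fintype.sum_prod_type]
      calc (∑ o : O, ∑ c : Fin k → O, contProb π p (Fin.cons o c))
          = ∑ o : O, π p o * ∑ c : Fin k → O, contProb π (p ++ [o]) c := by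
            refine Finset.sum_congr rfl fun o _ => ?_
            rw [Finset.mul_sum]
            exact Finset.sum_congr rfl fun c _ => contProb_cons π p o c
        _ = 1 := by simp [ih, hsum]

lemma sum_seqProb (π : List O → O → ℝ) (hsum : ∀ h, ∑ o, π h o = 1) (k : ℕ) :
    ∑ c : Fin k → O, seqProb π c = 1 := by
  simpa [contProb_nil] using sum_contProb π hsum k []

lemma Qval_eq_of (π : List O → O → ℝ) (r : List O → ℝ) (T : ℕ) (p : List O) (k : ℕ)
    (hk : T - p.length = k) :
    Qval π r T p = ∑ c : Fin k → O,
      contProb π p c * (r p + ∑ i : Fin k, r (p ++ (List.ofFn c).take (i + 1))) := by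
  subst hk; rfl

lemma Qval_shift (π : List O → O → ℝ) (r : List O → ℝ) (T : ℕ) (o : O) (l : List O) :
    Qval π r (T + 1) (o :: l)
      = Qval (fun h => π (o :: h)) (fun h => r (o :: h)) T l := by
  rw [Qval_eq_of π r (T+1) (o :: l) (T - l.length) (by simp),
    Qval_eq_of (fun h => π (o :: h)) (fun h => r (o :: h)) T l (T - l.length) rfl]
  refine Finset.sum_congr rfl fun c _ => ?_
  rw [contProb_cons_prefix]
  rfl

lemma Vval_shift (π : List O → O → ℝ) (r : List O → ℝ) (T : ℕ) (o : O) (l : List O) :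
    Vval π r (T + 1) (o :: l)
      = Vval (fun h => π (o :: h)) (fun h => r (o :: h)) T l := by
  unfold Vval
  refine Finset.sum_congr rfl fun a _ => ?_
  rw [show (o :: l) ++ [a] = o :: (l ++ [a]) from rfl, Qval_shift]

lemma sum_deriv_eq_zero (π : ℝ → List O → O → ℝ)
    (hsum : ∀ θ h, ∑ o, π θ h o = 1)
    (hdiff : ∀ h o, Differentiable ℝ (fun θ => π θ h o)) (h : List O) (θ : ℝ) :
    ∑ o : O, deriv (fun θ' => π θ' h o) θ = 0 := by
  have h1 : HasDerivAt (fun θ' => ∑ o : O, π θ' h o)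
      (∑ o : O, deriv (fun θ' => π θ' h o) θ) θ :=
    HasDerivAt.fun_sum fun o _ => ((hdiff h o) θ).hasDerivAt
  have h2 : (fun θ' => ∑ o : O, π θ' h o) = fun _ => (1:ℝ) := funext fun θ' => hsum θ' h
  rw [h2] at h1
  exact h1.unique (hasDerivAt_const θ 1)

end Helpers2

section Main
variable {O : Type*} [Fintype O]

lemma ofFn_cons (o : O) {n : ℕ} (s : Fin n → O) :
    List.ofFn (Fin.cons (α := fun _ => O) o s) = o :: List.ofFn s := by
  simp [List.ofFn_succ]

/-- The inner expectation appearing in the off-policy gradient at step `t`. -/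
noncomputable def innerT (π : ℝ → List O → O → ℝ) (πold : List O → O → ℝ)
    (r : List O → ℝ) (T : ℕ) (θ : ℝ) (t : ℕ) : ℝ :=
  ∑ s : Fin (t + 1) → O,
    seqProb πold s *
      (prefixRatio (π θ) πold s *
        deriv (fun θ' => Real.log (π θ' ((List.ofFn s).take t) (s (Fin.last t)))) θ *
        (Qval (π θ) r T (List.ofFn s) - Vval (π θ) r T ((List.ofFn s).take t)))

lemma innerT_zero (π : ℝ → List O → O → ℝ) (πold : List O → O → ℝ)
    (hpos : ∀ θ h o, 0 < π θ h o)
    (hdiff : ∀ h o, Differentiable ℝ (fun θ => π θ h o))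
    (holdpos : ∀ h o, 0 < πold h o)
    (r : List O → ℝ) (T : ℕ) (θ : ℝ) :
    innerT π πold r T θ 0
      = ∑ a : O, deriv (fun θ' => π θ' [] a) θ *
          (Qval (π θ) r T [a] - Vval (π θ) r T []) := by
  unfold innerT
  rw [← Equiv.sum_comp (Equiv.funUnique (Fin 1) O).symm]
  refine Finset.sum_congr rfl fun a _ => ?_
  have hfe : ((Equiv.funUnique (Fin 1) O).symm a) = fun _ : Fin 1 => a := rfl
  rw [hfe]
  have h1 : seqProb πold (fun _ : Fin 1 => a) = πold [] a := by
    simp [seqProb]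
  have h2 : prefixRatio (π θ) πold (fun _ : Fin 1 => a) = π θ [] a / πold [] a := by
    simp [prefixRatio]
  have h3 : (List.ofFn (fun _ : Fin 1 => a)) = [a] := by simp
  have h4 : deriv (fun θ' => Real.log (π θ' ((List.ofFn (fun _ : Fin 1 => a)).take 0)
        ((fun _ : Fin 1 => a) (Fin.last 0)))) θ
      = deriv (fun θ' => π θ' [] a) θ / π θ [] a := by
    simp only [List.take_zero]
    exact (((hdiff [] a θ).hasDerivAt).log (ne_of_gt (hpos θ [] a))).deriv
  rw [h1, h2, h4, h3]
  have hπ : π θ [] a ≠ 0 := ne_of_gt (hpos θ [] a)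
  have hπo : πold [] a ≠ 0 := ne_of_gt (holdpos [] a)
  field_simp
  simp

lemma innerT_succ (π : ℝ → List O → O → ℝ) (πold : List O → O → ℝ)
    (holdpos : ∀ h o, 0 < πold h o)
    (r : List O → ℝ) (T : ℕ) (θ : ℝ) (j : ℕ) :
    innerT π πold r (T + 1) θ (j + 1)
      = ∑ o : O, π θ [] o *
          innerT (fun θ' h => π θ' (o :: h)) (fun h => πold (o :: h))
            (fun h => r (o :: h)) T θ j := by
  unfold innerT
  rw [← Equiv.sum_comp (Fin.consEquiv fun _ => O), Fintype.sum_prod_type]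
  refine Finset.sum_congr rfl fun o _ => ?_
  rw [Finset.mul_sum]
  refine Finset.sum_congr rfl fun s' _ => ?_
  have hce : ((Fin.consEquiv fun _ => O) (o, s')) = Fin.cons (α := fun _ => O) o s' := rfl
  rw [hce]
  beta_reduce
  have hofn : List.ofFn (Fin.cons (α := fun _ => O) o s') = o :: List.ofFn s' := ofFn_cons o s'
  have hlast : (Fin.cons (α := fun _ => O) o s') (Fin.last (j + 1)) = s' (Fin.last j) := by
    rw [← Fin.succ_last, Fin.cons_succ]
  rw [seqProb_cons, prefixRatio_cons, hofn, List.take_succ_cons, hlast]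
  rw [Qval_shift, Vval_shift]
  have hπo : πold [] o ≠ 0 := ne_of_gt (holdpos [] o)
  field_simp

end Main

section Main2
variable {O : Type*} [Fintype O]

/-- The tail expectation after first action `o`. -/
noncomputable def Ftail (π : ℝ → List O → O → ℝ) (r : List O → ℝ) (T : ℕ) (o : O)
    (θ' : ℝ) : ℝ :=
  ∑ s' : Fin T → O, seqProb (fun h => π θ' (o :: h)) s' *
    ∑ j : Fin T, r (o :: (List.ofFn s').take (j + 1))

lemma reward_cons (r : List O → ℝ) (o : O) {n : ℕ} (s : Fin n → O) :
    ∑ i : Fin (n+1), r ((List.ofFn (Fin.cons (α := fun _ => O) o s)).take (↑i + 1))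
      = r [o] + ∑ j : Fin n, r (o :: (List.ofFn s).take (↑j + 1)) := by
  rw [Fin.sum_univ_succ, ofFn_cons]
  simp [List.take_succ_cons, Fin.val_succ]

lemma LHS_decomp (π : ℝ → List O → O → ℝ) (hsum : ∀ θ h, ∑ o, π θ h o = 1)
    (r : List O → ℝ) (T : ℕ) (θ' : ℝ) :
    (∑ s : Fin (T+1) → O, seqProb (π θ') s * ∑ i : Fin (T+1), r ((List.ofFn s).take (↑i + 1)))
      = ∑ o : O, π θ' [] o * (r [o] + Ftail π r T o θ') := by
  rw [← Equiv.sum_comp (Fin.consEquiv fun _ => O), Fintype.sum_prod_type]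
  refine Finset.sum_congr rfl fun o _ => ?_
  calc (∑ s' : Fin T → O, seqProb (π θ') ((Fin.consEquiv fun _ => O) (o, s')) *
          ∑ i : Fin (T+1), r ((List.ofFn ((Fin.consEquiv fun _ => O) (o, s'))).take (↑i + 1)))
      = ∑ s' : Fin T → O, π θ' [] o * (seqProb (fun h => π θ' (o :: h)) s' * r [o]
          + seqProb (fun h => π θ' (o :: h)) s' *
              ∑ j : Fin T, r (o :: (List.ofFn s').take (↑j + 1))) := by
        refine Finset.sum_congr rfl fun s' _ => ?_
        have hce : ((Fin.consEquiv fun _ => O) (o, s')) = Fin.cons (α := fun _ => O) o s' := rfl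
        rw [hce, seqProb_cons, reward_cons]; ring
    _ = π θ' [] o * (r [o] + Ftail π r T o θ') := by
        rw [← Finset.mul_sum, Finset.sum_add_distrib, ← Finset.sum_mul,
          sum_seqProb _ (fun h => hsum θ' (o :: h)) T, one_mul]
        rfl

lemma Ftail_diff (π : ℝ → List O → O → ℝ)
    (hdiff : ∀ h o, Differentiable ℝ (fun θ => π θ h o))
    (r : List O → ℝ) (T : ℕ) (o : O) : Differentiable ℝ (Ftail π r T o) := by
  unfold Ftail seqProb
  exact Differentiable.fun_sum fun s' _ =>
    (Differentiable.fun_finsetProd fun i _ => hdiff _ _).mul_const _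

lemma Qval_singleton (π : ℝ → List O → O → ℝ) (hsum : ∀ θ h, ∑ o, π θ h o = 1)
    (r : List O → ℝ) (T : ℕ) (a : O) (θ : ℝ) :
    Qval (π θ) r (T + 1) [a] = r [a] + Ftail π r T a θ := by
  rw [show ([a] : List O) = a :: ([] : List O) from rfl, Qval_shift,
    Qval_eq_of _ _ T [] T rfl]
  simp only [contProb_nil, List.nil_append]
  beta_reduce
  calc (∑ c : Fin T → O, seqProb (fun h => π θ (a :: h)) c *
          (r [a] + ∑ i : Fin T, r (a :: (List.ofFn c).take (↑i + 1))))
      = ∑ c : Fin T → O, (seqProb (fun h => π θ (a :: h)) c * r [a]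
          + seqProb (fun h => π θ (a :: h)) c *
              ∑ i : Fin T, r (a :: (List.ofFn c).take (↑i + 1))) := by
        refine Finset.sum_congr rfl fun c _ => ?_; ring
    _ = r [a] + Ftail π r T a θ := by
        rw [Finset.sum_add_distrib, ← Finset.sum_mul,
          sum_seqProb _ (fun h => hsum θ (a :: h)) T, one_mul]
        rfl

end Main2

theorem auxmain {O : Type*} [Fintype O] (T : ℕ) :
    ∀ (π : ℝ → List O → O → ℝ) (πold : List O → O → ℝ),
      (∀ θ h o, 0 < π θ h o) → (∀ θ h, ∑ o, π θ h o = 1) →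
      (∀ h o, Differentiable ℝ (fun θ => π θ h o)) →
      (∀ h o, 0 < πold h o) → (∀ h, ∑ o, πold h o = 1) →
      ∀ (r : List O → ℝ) (θ : ℝ),
      deriv (fun θ' => ∑ s : Fin T → O,
          seqProb (π θ') s * ∑ i : Fin T, r ((List.ofFn s).take (↑i + 1))) θ
        = ∑ t : Fin T, innerT π πold r T θ ↑t := by
  induction T with
  | zero => intro π πold _ _ _ _ _ r θ; simp
  | succ T ih =>
    intro π πold hpos hsum hdiff holdpos hold1 r θ
    have hfun : (fun θ' => ∑ s : Fin (T+1) → O,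
          seqProb (π θ') s * ∑ i : Fin (T+1), r ((List.ofFn s).take (↑i + 1)))
        = fun θ' => ∑ o : O, π θ' [] o * (r [o] + Ftail π r T o θ') :=
      funext fun θ' => LHS_decomp π hsum r T θ'
    rw [hfun]
    have hF : ∀ o : O, Differentiable ℝ (Ftail π r T o) := fun o => Ftail_diff π hdiff r T o
    have hd : HasDerivAt (fun θ' => ∑ o : O, π θ' [] o * (r [o] + Ftail π r T o θ'))
        (∑ o : O, (deriv (fun θ' => π θ' [] o) θ * (r [o] + Ftail π r T o θ)
          + π θ [] o * (0 + deriv (Ftail π r T o) θ))) θ :=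
      HasDerivAt.fun_sum fun o _ =>
        (hdiff [] o θ).hasDerivAt.mul ((hasDerivAt_const θ (r [o])).add ((hF o θ).hasDerivAt))
    rw [hd.deriv]
    have hdF : ∀ o : O, deriv (Ftail π r T o) θ
        = ∑ t : Fin T, innerT (fun θ' h => π θ' (o :: h)) (fun h => πold (o :: h))
            (fun h => r (o :: h)) T θ ↑t := by
      intro o
      exact ih (fun θ' h => π θ' (o :: h)) (fun h => πold (o :: h))
        (fun θ h a => hpos θ (o :: h) a) (fun θ h => hsum θ (o :: h))
        (fun h a => hdiff (o :: h) a)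
        (fun h a => holdpos (o :: h) a) (fun h => hold1 (o :: h)) (fun h => r (o :: h)) θ
    rw [Fin.sum_univ_succ]
    have h0 : innerT π πold r (T+1) θ ↑(0 : Fin (T+1))
        = ∑ a : O, deriv (fun θ' => π θ' [] a) θ *
            (Qval (π θ) r (T+1) [a] - Vval (π θ) r (T+1) []) :=
      innerT_zero π πold hpos hdiff holdpos r (T+1) θ
    have hsucc : ∀ j : Fin T, innerT π πold r (T+1) θ ↑(Fin.succ j)
        = ∑ o : O, π θ [] o * innerT (fun θ' h => π θ' (o :: h)) (fun h => πold (o :: h))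
            (fun h => r (o :: h)) T θ ↑j :=
      fun j => innerT_succ π πold holdpos r T θ ↑j
    rw [h0]
    simp only [zero_add]
    rw [Finset.sum_add_distrib]
    congr 1
    · calc (∑ o : O, deriv (fun θ' => π θ' [] o) θ * (r [o] + Ftail π r T o θ))
          = ∑ a : O, (deriv (fun θ' => π θ' [] a) θ *
              (Qval (π θ) r (T+1) [a] - Vval (π θ) r (T+1) [])
              + deriv (fun θ' => π θ' [] a) θ * Vval (π θ) r (T+1) []) := by
            refine Finset.sum_congr rfl fun a _ => ?_
            rw [Qval_singleton π hsum r T a θ]; ring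
        _ = (∑ a : O, deriv (fun θ' => π θ' [] a) θ *
              (Qval (π θ) r (T+1) [a] - Vval (π θ) r (T+1) []))
            + (∑ a : O, deriv (fun θ' => π θ' [] a) θ) * Vval (π θ) r (T+1) [] := by
            rw [Finset.sum_add_distrib, ← Finset.sum_mul]
        _ = ∑ a : O, deriv (fun θ' => π θ' [] a) θ *
              (Qval (π θ) r (T+1) [a] - Vval (π θ) r (T+1) []) := by
            rw [sum_deriv_eq_zero π hsum hdiff [] θ, zero_mul, add_zero]
    · calc (∑ o : O, π θ [] o * deriv (Ftail π r T o) θ)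
          = ∑ o : O, ∑ t : Fin T, π θ [] o *
              innerT (fun θ' h => π θ' (o :: h)) (fun h => πold (o :: h))
                (fun h => r (o :: h)) T θ ↑t := by
            refine Finset.sum_congr rfl fun o _ => ?_
            rw [hdF o, Finset.mul_sum]
        _ = ∑ t : Fin T, ∑ o : O, π θ [] o *
              innerT (fun θ' h => π θ' (o :: h)) (fun h => πold (o :: h))
                (fun h => r (o :: h)) T θ ↑t := Finset.sum_comm
        _ = ∑ j : Fin T, innerT π πold r (T+1) θ ↑(Fin.succ j) :=
            Finset.sum_congr rfl fun j _ => (hsucc j).symm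


/-- Off-policy policy gradient: if trajectories are sampled from a positive-probability
autoregressive policy `π_old`, then the derivative of `E_{π_θ}[R]`, `R = ∑_t r_t`, equals
`∑_{t=1}^T E_{o_{1:t}∼π_old}[ρ_{1:t} · ∂_θ log π_θ(o_t|o_{<t}) · A^π(o_t; o_{<t})]`, with
`ρ_{1:t} = ∏_{i=1}^t π_θ(o_i|o_{<i}) / π_old(o_i|o_{<i})` and `A^π = Q^π − V^π` under `π_θ`. -/
theorem off_policy_policy_gradient {O : Type*} [Fintype O]
    (π : ℝ → List O → O → ℝ) (πold : List O → O → ℝ)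
    (hpos : ∀ θ h o, 0 < π θ h o)
    (hsum : ∀ θ h, ∑ o, π θ h o = 1)
    (hdiff : ∀ h o, Differentiable ℝ (fun θ => π θ h o))
    (holdpos : ∀ h o, 0 < πold h o)
    (hold1 : ∀ h, ∑ o, πold h o = 1)
    (T : ℕ) (r : List O → ℝ) (θ : ℝ) :
    deriv (fun θ' => ∑ s : Fin T → O,
        seqProb (π θ') s * ∑ i : Fin T, r ((List.ofFn s).take (i + 1))) θ
      = ∑ t : Fin T, ∑ s : Fin (t + 1) → O,
          seqProb πold s *
            (prefixRatio (π θ) πold s *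
              deriv (fun θ' => Real.log (π θ' ((List.ofFn s).take t) (s (Fin.last t)))) θ *
              (Qval (π θ) r T (List.ofFn s) - Vval (π θ) r T ((List.ofFn s).take t))) := by
  exact auxmain T π πold hpos hsum hdiff holdpos hold1 r θ
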